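/- The bilinear form \phi_1 on the three-point Witt algebra defined on basis elements by \phi_1(d^1_k, d^1_l) = 2(l^2-l)(2l-1)\delta_{k+l,1} + (l^3-l)\delta_{k+l,0}, \phi_1(d^1_k, d_l) = 6(-1)^{k+l} 2^{k+l} (k-1)k l (2k+2l-3)!!/(k+l+1)!, \phi_1(d_l, d^1_k) = -\phi_1(d^1_k, d_l), and \phi_1(d_k, d_l) = l(l+1)(l+2)\delta_{k+l,-2} + 4l(2l+1)(l+1)\delta_{k+l,-1} + 4l(2l-1)(2l+1)\delta_{k+l,0}, is a skew-symmetric 2-cocycle: it satisfies \phi_1([a,b],c) + \phi_1([b,c],a) + \phi_1([c,a],b) = 0 for all a, b, c in the algebra. -/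

import Mathlib

/-- The underlying space of the three-point Witt algebra, with basis indexed by
`Bool × ℤ`: `(false, n) ↔ d_n` and `(true, n) ↔ d¹_n`. -/
abbrev WittV : Type := (Bool × ℤ) →₀ ℂ

noncomputable def eW (p : Bool × ℤ) : WittV := Finsupp.single p 1

/-- The three-point Witt bracket on basis elements. -/
noncomputable def brBasis : Bool × ℤ → Bool × ℤ → WittV
  | (false, m), (false, n) =>
      ((n : ℂ) - m) • (eW (false, m + n + 1) + (4 : ℂ) • eW (false, m + n))
  | (true, m), (true, n) => ((n : ℂ) - m) • eW (false, m + n - 1)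
  | (false, m), (true, n) =>
      ((n : ℂ) - m - 1) • eW (true, m + n + 1) +
        (4 * (n : ℂ) - 4 * m - 2) • eW (true, m + n)
  | (true, m), (false, n) =>
      -(((m : ℂ) - n - 1) • eW (true, n + m + 1) +
        (4 * (m : ℂ) - 4 * n - 2) • eW (true, n + m))

/-- The three-point Witt bracket, extended bilinearly. -/
noncomputable def brW : WittV →ₗ[ℂ] WittV →ₗ[ℂ] WittV :=
  Finsupp.lift (WittV →ₗ[ℂ] WittV) ℂ (Bool × ℤ) fun p =>
    Finsupp.lift WittV ℂ (Bool × ℤ) fun q => brBasis p q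

/-- The odd double factorial `j‼` extended to negative odd integers by the
convention `(-2k-1)‼ = (-1)ᵏ/(2k-1)‼`. -/
noncomputable def oddDF (j : ℤ) : ℂ :=
  if -1 ≤ j then (Nat.doubleFactorial j.toNat : ℂ)
  else (-1) ^ ((-j - 1) / 2).toNat / (Nat.doubleFactorial (-j - 2).toNat : ℂ)

/-- `1/j!`, extended by `0` for negative `j`. -/
noncomputable def invFact (j : ℤ) : ℂ :=
  if 0 ≤ j then ((j.toNat).factorial : ℂ)⁻¹ else 0

/-- `φ₁(d¹_k, d_l) = 6(-1)^{k+l} 2^{k+l} (k-1)k l (2k+2l-3)‼/(k+l+1)!`. -/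
noncomputable def phiMix (k l : ℤ) : ℂ :=
  6 * (-1 : ℂ) ^ (k + l) * (2 : ℂ) ^ (k + l) * ((k : ℂ) - 1) * k * l *
    oddDF (2 * k + 2 * l - 3) * invFact (k + l + 1)

/-- The cocycle `φ₁` on basis elements. -/
noncomputable def phiBasis : Bool × ℤ → Bool × ℤ → ℂ
  | (true, k), (true, l) =>
      (if k + l = 1 then 2 * ((l : ℂ) ^ 2 - l) * (2 * l - 1) else 0) +
        (if k + l = 0 then (l : ℂ) ^ 3 - l else 0)
  | (true, k), (false, l) => phiMix k l
  | (false, k), (true, l) => -phiMix l k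
  | (false, k), (false, l) =>
      (if k + l = -2 then (l : ℂ) * (l + 1) * (l + 2) else 0) +
        (if k + l = -1 then 4 * (l : ℂ) * (2 * l + 1) * (l + 1) else 0) +
          (if k + l = 0 then 4 * (l : ℂ) * (2 * l - 1) * (2 * l + 1) else 0)

/-- The cocycle `φ₁`, extended bilinearly. -/
noncomputable def phiW : WittV →ₗ[ℂ] WittV →ₗ[ℂ] ℂ :=
  Finsupp.lift (WittV →ₗ[ℂ] ℂ) ℂ (Bool × ℤ) fun p =>
    Finsupp.lift ℂ ℂ (Bool × ℤ) fun q => phiBasis p q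

lemma phiW_single (p q : Bool × ℤ) : phiW (eW p) (eW q) = phiBasis p q := by
  simp [phiW, eW, Finsupp.lift_apply, Finsupp.sum_single_index]

lemma brW_single (p q : Bool × ℤ) : brW (eW p) (eW q) = brBasis p q := by
  simp [brW, eW, Finsupp.lift_apply, Finsupp.sum_single_index]
noncomputable def cW (s : ℤ) : ℂ := 6 * (-1:ℂ)^s * (2:ℂ)^s * oddDF (2*s-3) * invFact (s+1)

lemma phiMix_eq (k l : ℤ) : phiMix k l = cW (k+l) * ((k:ℂ)-1) * k * l := by
  unfold phiMix cW
  rw [show 2*(k+l)-3 = 2*k+2*l-3 by ring]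
  ring

lemma invFact_rec (j : ℤ) : ((j:ℂ)+1) * invFact (j+1) = invFact j := by
  unfold invFact
  rcases lt_trichotomy j (-1) with h | h | h
  · rw [if_neg (by omega), if_neg (by omega), mul_zero]
  · subst h; norm_num
  · have h0 : 0 ≤ j := by omega
    rw [if_pos (by omega), if_pos h0]
    obtain ⟨n, rfl⟩ := Int.eq_ofNat_of_zero_le h0
    rw [show ((n:ℤ)+1).toNat = n+1 by omega, Int.toNat_natCast, Nat.factorial_succ]
    have hne : ((n.factorial : ℂ)) ≠ 0 := Nat.cast_ne_zero.mpr (Nat.factorial_ne_zero n)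
    push_cast
    rw [mul_comm ((n:ℂ)+1), mul_inv]
    have h1 : ((n:ℂ)+1) ≠ 0 := by
      have := Nat.cast_add_one_ne_zero (R := ℂ) n
      push_cast at this ⊢; exact this
    rw [mul_right_comm, inv_mul_cancel₀ h1, one_mul]
lemma oddDF_rec (s : ℤ) : oddDF (2*s-1) = (2*(s:ℂ)-1) * oddDF (2*s-3) := by
  unfold oddDF
  rcases lt_trichotomy s 1 with h | h | h
  · rcases eq_or_lt_of_le (by omega : s ≤ 0) with h0 | h0
    · -- s = 0
      subst h0
      norm_num [Nat.doubleFactorial]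
      rw [show (-1:ℤ).toNat.doubleFactorial = 1 from rfl]
    · -- s ≤ -1
      have hs : s ≤ -1 := by omega
      obtain ⟨m', hm⟩ := Int.eq_ofNat_of_zero_le (show (0:ℤ) ≤ -s - 1 by omega)
      have hs' : s = -(m' : ℤ) - 1 := by omega
      subst hs'
      rw [if_neg (by omega), if_neg (by omega)]
      rw [show (-(2*(-(m':ℤ)-1)-1) - 1)/2 = (m':ℤ)+1 by omega,
          show (-(2*(-(m':ℤ)-1)-1) - 2) = 2*(m':ℤ)+1 by omega,
          show (-(2*(-(m':ℤ)-1)-3) - 1)/2 = (m':ℤ)+2 by omega,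
          show (-(2*(-(m':ℤ)-1)-3) - 2) = 2*(m':ℤ)+3 by omega,
          show ((m':ℤ)+1).toNat = m'+1 by omega,
          show ((m':ℤ)+2).toNat = m'+2 by omega,
          show (2*(m':ℤ)+1).toNat = 2*m'+1 by omega,
          show (2*(m':ℤ)+3).toNat = 2*m'+3 by omega,
          show 2*m'+3 = (2*m'+1)+2 from rfl,
          Nat.doubleFactorial_add_two]
      have hd : ((Nat.doubleFactorial (2*m'+1)) : ℂ) ≠ 0 := Nat.cast_ne_zero.mpr (Nat.doubleFactorial_pos _).ne'
      have hc : (((2*m'+3 : ℕ)) : ℂ) ≠ 0 := Nat.cast_ne_zero.mpr (by omega)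
      push_cast at hc
      rw [Nat.cast_mul]
      set D : ℂ := ((Nat.doubleFactorial (2*m'+1) : ℕ) : ℂ) with hD
      push_cast
      rw [show (2*(-(m':ℂ)-1)-1) = -(2*(m':ℂ)+3) by ring,
         show ((-1:ℂ))^(m'+2) = -((-1:ℂ)^(m'+1)) by rw [pow_succ]; ring,
         show (2*(m':ℂ)+1+2) = (2*(m':ℂ)+3) by ring]
      rw [mul_comm (2*(m':ℂ)+3) D, ← div_div]
      field_simp
  · subst h
    norm_num [Nat.doubleFactorial]
    rw [show (-1:ℤ).toNat.doubleFactorial = 1 from rfl, Nat.cast_one]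
  · -- s ≥ 2
    obtain ⟨n, hn⟩ := Int.eq_ofNat_of_zero_le (show (0:ℤ) ≤ 2*s-3 by omega)
    rw [if_pos (by omega), if_pos (by omega),
        show (2*s-1).toNat = n+2 by omega, show (2*s-3).toNat = n by omega,
        Nat.doubleFactorial_add_two]
    have : (2*(s:ℂ)-1) = ((n:ℂ)+2) := by
      exact_mod_cast (show (2*s-1 : ℤ) = (n:ℤ)+2 by omega)
    push_cast
    rw [this]
lemma invFact_neg (j : ℤ) (h : j < 0) : invFact j = 0 := by
  unfold invFact; rw [if_neg (by omega)]

lemma cW_neg (s : ℤ) (h : s ≤ -2) : cW s = 0 := by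
  unfold cW; rw [invFact_neg _ (by omega), mul_zero]

lemma cW_rec (s : ℤ) : ((s:ℂ)+2) * cW (s+1) + 2*(2*(s:ℂ)-1) * cW s = 0 := by
  unfold cW
  rw [show 2*(s+1)-3 = 2*s-1 by ring, oddDF_rec s,
      zpow_add_one₀ (by norm_num : (-1:ℂ) ≠ 0), zpow_add_one₀ (by norm_num : (2:ℂ) ≠ 0),
      show s+1+1 = (s+1)+1 by ring]
  have h := invFact_rec (s+1)
  push_cast at h
  linear_combination (-12*(2*(s:ℂ)-1)*(-1:ℂ)^s*(2:ℂ)^s*oddDF (2*s-3)) * h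
lemma phiBasis_skew (p q : Bool × ℤ) : phiBasis p q = -phiBasis q p := by
  obtain ⟨b1, k⟩ := p; obtain ⟨b2, l⟩ := q
  cases b1 <;> cases b2
  · -- ff
    simp only [phiBasis]
    simp only [show l+k = -2 ↔ k+l = -2 from by omega,
      show l+k = -1 ↔ k+l = -1 from by omega, show l+k = 0 ↔ k+l = 0 from by omega]
    split_ifs <;> try (exfalso; omega)
    all_goals try ring
    all_goals (first
      | ((have hk : k = -2 - l := by omega); subst hk; push_cast; ring)
      | ((have hk : k = -1 - l := by omega); subst hk; push_cast; ring)
      | ((have hk : k = - l := by omega); subst hk; push_cast; ring))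
  · simp only [phiBasis]; try ring
  · simp only [phiBasis]; try ring
  · -- tt
    simp only [phiBasis]
    simp only [show l+k = 1 ↔ k+l = 1 from by omega, show l+k = 0 ↔ k+l = 0 from by omega]
    split_ifs <;> try (exfalso; omega)
    all_goals try ring
    all_goals (first
      | ((have hk : k = 1 - l := by omega); subst hk; push_cast; ring)
      | ((have hk : k = - l := by omega); subst hk; push_cast; ring))
lemma cocycle_fff (m n p : ℤ) :
    ((n:ℂ)-m) * (phiBasis (false, m+n+1) (false,p) + 4 * phiBasis (false,m+n) (false,p))
    + ((p:ℂ)-n) * (phiBasis (false, n+p+1) (false,m) + 4 * phiBasis (false,n+p) (false,m))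
    + ((m:ℂ)-p) * (phiBasis (false, p+m+1) (false,n) + 4 * phiBasis (false,p+m) (false,n)) = 0 := by
  simp only [phiBasis]
  simp only [show m+n+1+p = -2 ↔ m+n+p = -3 from by omega,
    show m+n+1+p = -1 ↔ m+n+p = -2 from by omega,
    show m+n+1+p = 0 ↔ m+n+p = -1 from by omega,
    show n+p+1+m = -2 ↔ m+n+p = -3 from by omega,
    show n+p+1+m = -1 ↔ m+n+p = -2 from by omega,
    show n+p+1+m = 0 ↔ m+n+p = -1 from by omega,
    show p+m+1+n = -2 ↔ m+n+p = -3 from by omega,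
    show p+m+1+n = -1 ↔ m+n+p = -2 from by omega,
    show p+m+1+n = 0 ↔ m+n+p = -1 from by omega,
    show m+n+p = -2 ↔ m+n+p = -2 from by omega,
    show n+p+m = -2 ↔ m+n+p = -2 from by omega,
    show p+m+n = -2 ↔ m+n+p = -2 from by omega,
    show n+p+m = -1 ↔ m+n+p = -1 from by omega,
    show p+m+n = -1 ↔ m+n+p = -1 from by omega,
    show n+p+m = 0 ↔ m+n+p = 0 from by omega,
    show p+m+n = 0 ↔ m+n+p = 0 from by omega]
  split_ifs <;> try (exfalso; omega)
  all_goals try ring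
  all_goals (first
    | ((have hp : p = -3-m-n := by omega); subst hp; push_cast; ring)
    | ((have hp : p = -2-m-n := by omega); subst hp; push_cast; ring)
    | ((have hp : p = -1-m-n := by omega); subst hp; push_cast; ring)
    | ((have hp : p = -m-n := by omega); subst hp; push_cast; ring))

lemma cocycle_ttf (k l n : ℤ) :
    ((l:ℂ)-k) * phiBasis (false, k+l-1) (false,n)
    - (((l:ℂ)-n-1) * phiBasis (true, n+l+1) (true,k)
        + (4*(l:ℂ)-4*n-2) * phiBasis (true, n+l) (true,k))
    + ((k:ℂ)-n-1) * phiBasis (true, n+k+1) (true,l)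
        + (4*(k:ℂ)-4*n-2) * phiBasis (true, n+k) (true,l) = 0 := by
  simp only [phiBasis]
  simp only [show k+l-1+n = -2 ↔ k+l+n = -1 from by omega,
    show k+l-1+n = -1 ↔ k+l+n = 0 from by omega,
    show k+l-1+n = 0 ↔ k+l+n = 1 from by omega,
    show n+l+1+k = 1 ↔ k+l+n = 0 from by omega,
    show n+l+1+k = 0 ↔ k+l+n = -1 from by omega,
    show n+l+k = 1 ↔ k+l+n = 1 from by omega,
    show n+l+k = 0 ↔ k+l+n = 0 from by omega,
    show n+k+1+l = 1 ↔ k+l+n = 0 from by omega,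
    show n+k+1+l = 0 ↔ k+l+n = -1 from by omega,
    show n+k+l = 1 ↔ k+l+n = 1 from by omega,
    show n+k+l = 0 ↔ k+l+n = 0 from by omega]
  split_ifs <;> try (exfalso; omega)
  all_goals try ring
  all_goals (first
    | ((have hn : n = -1-k-l := by omega); subst hn; push_cast; ring)
    | ((have hn : n = -k-l := by omega); subst hn; push_cast; ring)
    | ((have hn : n = 1-k-l := by omega); subst hn; push_cast; ring))
lemma cocycle_tff (k m n : ℤ) :
    -( ((k:ℂ)-m-1) * phiBasis (true, m+k+1) (false,n)
       + (4*(k:ℂ)-4*m-2) * phiBasis (true, m+k) (false,n) )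
    + ((n:ℂ)-m) * (phiBasis (false, m+n+1) (true,k) + 4 * phiBasis (false,m+n) (true,k))
    + (((k:ℂ)-n-1) * phiBasis (true, n+k+1) (false,m)
       + (4*(k:ℂ)-4*n-2) * phiBasis (true, n+k) (false,m)) = 0 := by
  simp only [phiBasis, phiMix_eq]
  simp only [show m+k+1+n = k+m+n+1 from by ring, show m+k+n = k+m+n from by ring,
    show k+(m+n+1) = k+m+n+1 from by ring, show k+(m+n) = k+m+n from by ring,
    show n+k+1+m = k+m+n+1 from by ring, show n+k+m = k+m+n from by ring]
  push_cast
  have h := cW_rec (k+m+n)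
  push_cast at h
  linear_combination (((m:ℂ)-n) * ((k:ℂ)^2 - k + (m:ℂ)*n)) * h

lemma cocycle_ttt (k l n : ℤ) :
    ((l:ℂ)-k) * phiBasis (false, k+l-1) (true,n)
    + ((n:ℂ)-l) * phiBasis (false, l+n-1) (true,k)
    + ((k:ℂ)-n) * phiBasis (false, n+k-1) (true,l) = 0 := by
  simp only [phiBasis, phiMix_eq]
  simp only [show n+(k+l-1) = k+l+n-1 from by ring, show k+(l+n-1) = k+l+n-1 from by ring,
    show l+(n+k-1) = k+l+n-1 from by ring]
  push_cast
  ring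
lemma Jb (p q r : Bool × ℤ) :
    phiW (brW (eW p) (eW q)) (eW r) + phiW (brW (eW q) (eW r)) (eW p)
      + phiW (brW (eW r) (eW p)) (eW q) = 0 := by
  obtain ⟨b1, x⟩ := p; obtain ⟨b2, y⟩ := q; obtain ⟨b3, z⟩ := r
  simp only [brW_single]
  cases b1 <;> cases b2 <;> cases b3 <;>
    simp only [brBasis, map_add, map_smul, map_neg, LinearMap.add_apply,
      LinearMap.smul_apply, LinearMap.neg_apply, phiW_single, smul_eq_mul]
  · linear_combination cocycle_fff x y z
  · linear_combination cocycle_tff z x y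
  · linear_combination cocycle_tff y z x
  · linear_combination cocycle_ttf y z x
  · linear_combination cocycle_tff x y z
  · linear_combination cocycle_ttf z x y
  · linear_combination cocycle_ttf x y z
  · linear_combination cocycle_ttt x y z
lemma single_eq_smul (a : Bool × ℤ) (x : ℂ) : (Finsupp.single a x : WittV) = x • eW a := by
  simp [eW, Finsupp.smul_single]


/-- `φ₁` is a skew-symmetric 2-cocycle on the three-point Witt
algebra: `φ₁(x,y) = -φ₁(y,x)` and
`φ₁([a,b],c) + φ₁([b,c],a) + φ₁([c,a],b) = 0` for all `a, b, c`. -/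
theorem phi1_skew_cocycle :
    (∀ x y : WittV, phiW x y = -phiW y x) ∧
    ∀ a b c : WittV,
      phiW (brW a b) c + phiW (brW b c) a + phiW (brW c a) b = 0 := by
  constructor
  · intro x y
    induction x using Finsupp.induction_linear with
    | zero => simp
    | add f g hf hg => simp only [map_add, LinearMap.add_apply]; rw [hf, hg]; ring
    | single a xa =>
      induction y using Finsupp.induction_linear with
      | zero => simp
      | add f g hf hg => simp only [map_add, LinearMap.add_apply]; rw [hf, hg]; ring
      | single b yb =>
        rw [single_eq_smul a xa, single_eq_smul b yb]
        simp only [map_smul, LinearMap.smul_apply, smul_eq_mul, phiW_single]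
        rw [phiBasis_skew a b]
        ring
  · intro a b c
    induction a using Finsupp.induction_linear with
    | zero => simp
    | add f g hf hg =>
      simp only [map_add, LinearMap.add_apply]
      linear_combination hf + hg
    | single pa xa =>
      induction b using Finsupp.induction_linear with
      | zero => simp
      | add f g hf hg =>
        simp only [map_add, LinearMap.add_apply]
        linear_combination hf + hg
      | single pb xb =>
        induction c using Finsupp.induction_linear with
        | zero => simp
        | add f g hf hg =>
          simp only [map_add, LinearMap.add_apply]
          linear_combination hf + hg
        | single pc xc =>
          rw [single_eq_smul pa xa, single_eq_smul pb xb, single_eq_smul pc xc]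
          simp only [map_smul, LinearMap.smul_apply, smul_eq_mul]
          linear_combination (xa * xb * xc) * Jb pa pb pc
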